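/- Let q be a prime power, 1 ≤ m ≤ ℓ, and s = gcd(m, ℓ). Suppose there exists an m-dimensional F_q-subspace U_0 of F_{q^ℓ} such that τ_{U_0} or −τ_{U_0} is a (q^s − 1)-th power in F_{q^ℓ}^×. Then there exists an m-dimensional F_q-subspace U of F_{q^ℓ} with τ_U = 1 or τ_U = −1. Moreover, U may be taken of the form U = γ·U_0 for a suitable γ ∈ F_{q^ℓ}^×. -/

import Mathlib

open scoped Classical

/-- Claim 2: with `s = gcd(m, ℓ)`, if some `m`-dimensional `F_q`-subspace `U₀` of `F_{q^ℓ}`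
has `τ_{U₀}` or `−τ_{U₀}` a `(q^s − 1)`-th power in `F_{q^ℓ}^×`, then a suitable multiple
`U = γ·U₀` is an `m`-dimensional subspace with `τ_U = ±1`. -/
theorem statement9 {K F : Type*} [Field K] [Field F] [Fintype K] [Fintype F] [Algebra K F]
    (q ℓ m s : ℕ) (hq : Fintype.card K = q) (hℓ : Module.finrank K F = ℓ)
    (hm1 : 1 ≤ m) (hmℓ : m ≤ ℓ) (hs : s = Nat.gcd m ℓ)
    (U₀ : Submodule K F) (hU₀ : Module.finrank K U₀ = m)
    (hpow : ∃ d : F, d ≠ 0 ∧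
      ((∏ u ∈ Finset.univ.filter (fun u : F => u ∈ U₀ ∧ u ≠ 0), u) = d ^ (q ^ s - 1) ∨
       -(∏ u ∈ Finset.univ.filter (fun u : F => u ∈ U₀ ∧ u ≠ 0), u) = d ^ (q ^ s - 1))) :
    ∃ γ : F, γ ≠ 0 ∧
      Module.finrank K (U₀.map (LinearMap.mulLeft K γ)) = m ∧
      ((∏ u ∈ Finset.univ.filter
          (fun u : F => u ∈ U₀.map (LinearMap.mulLeft K γ) ∧ u ≠ 0), u) = 1 ∨
       (∏ u ∈ Finset.univ.filter
          (fun u : F => u ∈ U₀.map (LinearMap.mulLeft K γ) ∧ u ≠ 0), u) = -1) := by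
  obtain ⟨d, hd, hcase⟩ := hpow
  have hq2 : 2 ≤ q := hq ▸ Fintype.one_lt_card
  set A := q ^ m - 1 with hA
  set B := q ^ ℓ - 1 with hB
  set g := Nat.gcd A B with hg
  have one_le_pow : ∀ k : ℕ, 1 ≤ q ^ k := fun k => Nat.one_le_pow _ _ (by omega)
  have hgdvd : g ∣ q ^ s - 1 := by
    have hxm : ((q : ZMod g)) ^ m = 1 := by
      have : (q ^ m : ℕ) ≡ 1 [MOD g] := ((Nat.modEq_iff_dvd' (one_le_pow m)).2 (Nat.gcd_dvd_left A B)).symm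
      have := (ZMod.natCast_eq_natCast_iff _ _ _).2 this
      push_cast at this
      exact this
    have hxl : ((q : ZMod g)) ^ ℓ = 1 := by
      have : (q ^ ℓ : ℕ) ≡ 1 [MOD g] := ((Nat.modEq_iff_dvd' (one_le_pow ℓ)).2 (Nat.gcd_dvd_right A B)).symm
      have := (ZMod.natCast_eq_natCast_iff _ _ _).2 this
      push_cast at this
      exact this
    have hxs : ((q : ZMod g)) ^ s = 1 := hs ▸ pow_gcd_eq_one.mpr ⟨hxm, hxl⟩
    have : (q ^ s : ℕ) ≡ 1 [MOD g] := by
      rw [Nat.ModEq]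
      have := (ZMod.natCast_eq_natCast_iff (q ^ s) 1 g).1 (by push_cast; exact hxs)
      exact this
    exact (Nat.modEq_iff_dvd' (one_le_pow s)).1 this.symm
  obtain ⟨k, hk⟩ := hgdvd
  -- cardinalities
  have hcardF : Fintype.card F = q ^ ℓ := by rw [← hq, ← hℓ]; exact Module.card_eq_pow_finrank
  have hcardU : Fintype.card U₀ = q ^ m := by rw [← hq, ← hU₀]; exact Module.card_eq_pow_finrank
  have hunits : ∀ c : Fˣ, c ^ B = 1 := by
    intro c
    have : Fintype.card Fˣ = B := by rw [Fintype.card_units, hcardF]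
    rw [← this]; exact pow_card_eq_one
  -- construct γ as a unit
  set c : Fˣ := (Units.mk0 d hd)⁻¹ with hc
  have hbez : (g : ℤ) = A * Nat.gcdA A B + B * Nat.gcdB A B := Nat.gcd_eq_gcd_ab A B
  set γu : Fˣ := (c ^ Nat.gcdA A B) ^ k with hγu
  have hγA : γu ^ A = c ^ (q ^ s - 1) := by
    set x : Fˣ := c ^ Nat.gcdA A B with hx
    have h1 : x ^ (A : ℤ) = c ^ (g : ℤ) := by
      rw [hx, ← zpow_mul, mul_comm]
      have h2 : c ^ ((B : ℤ) * Nat.gcdB A B) = 1 := by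
        rw [zpow_mul, zpow_natCast, hunits c, one_zpow]
      calc c ^ ((A : ℤ) * Nat.gcdA A B)
          = c ^ ((A : ℤ) * Nat.gcdA A B) * c ^ ((B : ℤ) * Nat.gcdB A B) := by rw [h2, mul_one]
        _ = c ^ (g : ℤ) := by rw [← zpow_add, ← hbez]
    have h1' : x ^ A = c ^ g := by
      rwa [zpow_natCast, zpow_natCast] at h1
    calc γu ^ A = (x ^ A) ^ k := by rw [hγu, ← pow_mul, ← pow_mul, mul_comm]
      _ = (c ^ g) ^ k := by rw [h1']
      _ = c ^ (q ^ s - 1) := by rw [← pow_mul, ← hk]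
  refine ⟨(γu : F), Units.ne_zero _, ?_, ?_⟩
  · -- finrank preserved
    have hγ0 : (γu : F) ≠ 0 := Units.ne_zero _
    have hbij : Function.Bijective (LinearMap.mulLeft K (γu : F)) := by
      constructor
      · exact fun a b h => mul_left_cancel₀ hγ0 h
      · intro y; exact ⟨(γu : F)⁻¹ * y, by rw [LinearMap.mulLeft_apply, ← mul_assoc, mul_inv_cancel₀ hγ0, one_mul]⟩
    set e := LinearEquiv.ofBijective (LinearMap.mulLeft K (γu : F)) hbij with he
    have : U₀.map (LinearMap.mulLeft K (γu : F)) = U₀.map (e : F →ₗ[K] F) := rfl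
    rw [this, LinearEquiv.finrank_map_eq, hU₀]
  · -- the product
    set γ : F := (γu : F)
    have hγ0 : γ ≠ 0 := Units.ne_zero _
    set S := Finset.univ.filter (fun u : F => u ∈ U₀ ∧ u ≠ 0) with hS
    set S' := Finset.univ.filter
        (fun u : F => u ∈ U₀.map (LinearMap.mulLeft K γ) ∧ u ≠ 0) with hS'
    have himg : S' = S.image (fun u => γ * u) := by
      ext u
      simp only [hS, hS', Finset.mem_image, Finset.mem_filter, Finset.mem_univ, true_and,
        Submodule.mem_map, LinearMap.mulLeft_apply]
      constructor
      · rintro ⟨⟨v, hv, rfl⟩, hne⟩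
        exact ⟨v, ⟨hv, fun h => hne (by rw [h, mul_zero])⟩, rfl⟩
      · rintro ⟨v, ⟨hv, hvne⟩, rfl⟩
        exact ⟨⟨v, hv, rfl⟩, mul_ne_zero hγ0 hvne⟩
    have hinj : Set.InjOn (fun u => γ * u) S := fun a _ b _ h => mul_left_cancel₀ hγ0 h
    have hcardS : S.card = A := by
      have hT : (Finset.univ.filter (fun u : F => u ∈ U₀)).card = q ^ m := by
        rw [← hcardU, Fintype.card_subtype]
      have hSe : S = (Finset.univ.filter (fun u : F => u ∈ U₀)).erase 0 := by
        ext u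
        simp only [hS, Finset.mem_filter, Finset.mem_univ, true_and, Finset.mem_erase]
        tauto
      rw [hSe, Finset.card_erase_of_mem (by simp [Submodule.zero_mem]), hT]
    have hprod : ∏ u ∈ S', u = γ ^ A * ∏ u ∈ S, u := by
      rw [himg, Finset.prod_image hinj, Finset.prod_mul_distrib, Finset.prod_const, hcardS]
    have hγAF : γ ^ A = (d ^ (q ^ s - 1))⁻¹ := by
      calc γ ^ A = ((γu ^ A : Fˣ) : F) := (Units.val_pow_eq_pow_val _ _).symm
        _ = ((c ^ (q ^ s - 1) : Fˣ) : F) := by rw [hγA]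
        _ = (d ^ (q ^ s - 1))⁻¹ := by rw [hc]; simp [inv_pow]
    have hdpow : d ^ (q ^ s - 1) ≠ 0 := pow_ne_zero _ hd
    rcases hcase with h | h
    · left
      rw [hprod, h, hγAF, inv_mul_cancel₀ hdpow]
    · right
      rw [hprod]
      have ht : (∏ u ∈ S, u) = -(d ^ (q ^ s - 1)) := by rw [← h]; ring
      rw [ht, hγAF]
      field_simp
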